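/- In the Clifford-Weil group setup, the operators d_r² and q_r = h d_r² h⁻¹ act on variables by d_r²(x_a) = (-1)^{τ(ar)} x_a and q_r(x_a) = x_{a+r}, and they satisfy the commutation relation q_r d_s² = (-1)^{τ(rs)} d_s² q_r for all r, s ∈ F. -/

import Mathlib

open Finset

private lemma zmod2_neg_one_pow_add (u v : ZMod 2) :
    ((-1 : ℂ)) ^ (u + v).val = (-1 : ℂ) ^ u.val * (-1 : ℂ) ^ v.val := by
  rw [ZMod.val_add, ← neg_one_pow_eq_pow_mod_two, pow_add]

private lemma neg_one_pow_mod (n m : ℕ) (hm : 2 ∣ m) :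
    ((-1 : ℂ)) ^ (n % m) = (-1 : ℂ) ^ n := by
  obtain ⟨k, rfl⟩ := hm
  conv_rhs => rw [← Nat.div_add_mod n (2 * k)]
  rw [pow_add, mul_assoc, pow_mul]
  norm_num

private lemma trace_sq {F : Type*} [Field F] [Fintype F] [Algebra (ZMod 2) F]
    [FiniteDimensional (ZMod 2) F] (x : F) :
    Algebra.trace (ZMod 2) F (x ^ 2) = Algebra.trace (ZMod 2) F x := by
  haveI : CharP F 2 := charP_of_injective_algebraMap' (ZMod 2) (A := F) 2
  haveI : Fact (Nat.Prime 2) := ⟨by norm_num⟩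
  let frob : F ≃ₐ[ZMod 2] F :=
    AlgEquiv.ofRingEquiv (f := frobeniusEquiv F 2) (fun r => by
      have h1 : frobeniusEquiv F 2 (algebraMap (ZMod 2) F r)
          = (algebraMap (ZMod 2) F r) ^ 2 := by
        simp [frobeniusEquiv_apply, frobenius_def]
      rw [h1, ← map_pow]
      congr 1
      fin_cases r <;> rfl)
  apply (algebraMap (ZMod 2) F).injective
  rw [trace_eq_sum_automorphisms, trace_eq_sum_automorphisms]
  refine Fintype.sum_equiv (Equiv.mulRight frob) _ _ (fun σ => ?_)
  show σ (x ^ 2) = (σ * frob) x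
  have : frob x = x ^ 2 := by simp [frob, frobeniusEquiv_apply, frobenius_def]
  show σ (x ^ 2) = σ (frob x)
  rw [this]

theorem stmt_17 {F : Type*} [Field F] [Fintype F] [DecidableEq F] [Algebra (ZMod 2) F]
    {f : ℕ} (hcard : Fintype.card F = 2 ^ f)
    (b : Module.Basis (Fin f) (ZMod 2) F)
    (hb : ∀ i j, Algebra.trace (ZMod 2) F (b i * b j) = if i = j then 1 else 0)
    (φ : F → ZMod 4)
    (hφ : ∀ a, φ a = ∑ i, ((b.repr a i).val : ZMod 4))
    -- the basis vector `x_a` of the space spanned by the variables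
    (e : F → F → ℂ) (he : ∀ a c, e a c = if c = a then 1 else 0)
    -- the MacWilliams transformation `h`
    (hOp : (F → ℂ) →ₗ[ℂ] (F → ℂ))
    (hh : ∀ a, hOp (e a) = ((Real.sqrt (Fintype.card F) : ℂ))⁻¹ •
      ∑ c : F, ((-1 : ℂ) ^ (Algebra.trace (ZMod 2) F (a * c)).val) • e c)
    -- the diagonal operators `d_r`
    (dOp : F → (F → ℂ) →ₗ[ℂ] (F → ℂ))
    (hd : ∀ r a, dOp r (e a) = (Complex.I ^ (φ (a * r)).val) • e a)
    -- `q_r := h d_r² h⁻¹`  (here `h⁻¹ = h`, as asserted in the first conclusion)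
    (qOp : F → (F → ℂ) →ₗ[ℂ] (F → ℂ))
    (hq : ∀ r, qOp r = hOp ∘ₗ (dOp r ∘ₗ dOp r) ∘ₗ hOp) :
    (hOp ∘ₗ hOp = LinearMap.id) ∧
    (∀ r a, (dOp r ∘ₗ dOp r) (e a) =
      ((-1 : ℂ) ^ (Algebra.trace (ZMod 2) F (a * r)).val) • e a) ∧
    (∀ r a, qOp r (e a) = e (a + r)) ∧
    (∀ r s, qOp r ∘ₗ (dOp s ∘ₗ dOp s) =
      ((-1 : ℂ) ^ (Algebra.trace (ZMod 2) F (r * s)).val) • ((dOp s ∘ₗ dOp s) ∘ₗ qOp r)) := by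
  classical
  haveI : FiniteDimensional (ZMod 2) F := Module.Finite.of_basis b
  haveI : CharP F 2 := charP_of_injective_algebraMap' (ZMod 2) (A := F) 2
  -- coordinates via the self-dual basis
  have hrepr : ∀ (x : F) (i : Fin f),
      Algebra.trace (ZMod 2) F (x * b i) = b.repr x i := by
    intro x i
    conv_lhs => rw [← b.sum_repr x, Finset.sum_mul, map_sum]
    have hterm : ∀ j : Fin f, Algebra.trace (ZMod 2) F ((b.repr x j • b j) * b i)
        = b.repr x j * (if j = i then 1 else 0) := by
      intro j
      rw [smul_mul_assoc, map_smul, hb j i, smul_eq_mul]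
    rw [Finset.sum_congr rfl (fun j _ => hterm j)]
    simp
  have hone : ∀ i, b.repr (1 : F) i = 1 := by
    intro i
    rw [← hrepr, one_mul, ← trace_sq (b i), sq, hb, if_pos rfl]
  have hsum_b : (∑ i, b i) = (1 : F) := by
    conv_rhs => rw [← b.sum_repr 1]
    simp [hone]
  have htr_sum : ∀ x : F, Algebra.trace (ZMod 2) F x = ∑ i, b.repr x i := by
    intro x
    calc Algebra.trace (ZMod 2) F x
        = Algebra.trace (ZMod 2) F (x * ∑ i, b i) := by rw [hsum_b, mul_one]
      _ = ∑ i, Algebra.trace (ZMod 2) F (x * b i) := by rw [Finset.mul_sum, map_sum]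
      _ = ∑ i, b.repr x i := Finset.sum_congr rfl (fun i _ => hrepr x i)
  -- parity of φ
  have hparity : ∀ x : F,
      ((-1 : ℂ)) ^ (φ x).val = (-1 : ℂ) ^ (Algebra.trace (ZMod 2) F x).val := by
    intro x
    set n := ∑ i, (b.repr x i).val with hn
    have h1 : φ x = (n : ZMod 4) := by rw [hφ, hn, Nat.cast_sum]
    have h2 : Algebra.trace (ZMod 2) F x = (n : ZMod 2) := by
      rw [htr_sum x, hn, Nat.cast_sum]
      exact Finset.sum_congr rfl (fun i _ => by simp [ZMod.natCast_val, ZMod.cast_id])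
    rw [h1, h2, ZMod.val_natCast, ZMod.val_natCast,
      neg_one_pow_mod n 4 (by norm_num), neg_one_pow_mod n 2 (by norm_num)]
  -- the character sum
  have hchar : ∀ t : F,
      (∑ c : F, ((-1 : ℂ)) ^ (Algebra.trace (ZMod 2) F (t * c)).val)
        = if t = 0 then (Fintype.card F : ℂ) else 0 := by
    intro t
    by_cases ht : t = 0
    · subst ht
      simp
    · rw [if_neg ht]
      obtain ⟨i, hi⟩ : ∃ i, b.repr t i ≠ 0 := by
        by_contra hall
        push_neg at hall
        apply ht
        apply b.repr.map_eq_zero_iff.mp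
        ext j
        simp [hall j]
      have hc0 : Algebra.trace (ZMod 2) F (t * b i) = 1 := by
        rw [hrepr]
        have : ∀ u : ZMod 2, u = 0 ∨ u = 1 := by decide
        rcases this (b.repr t i) with h | h
        · exact absurd h hi
        · exact h
      have key : ∀ c : F, ((-1 : ℂ)) ^ (Algebra.trace (ZMod 2) F (t * (c + b i))).val
          = -((-1 : ℂ)) ^ (Algebra.trace (ZMod 2) F (t * c)).val := by
        intro c
        rw [mul_add, map_add, zmod2_neg_one_pow_add, hc0]
        norm_num [show ((1:ZMod 2)).val = 1 from rfl]
      have hS : (∑ c : F, ((-1 : ℂ)) ^ (Algebra.trace (ZMod 2) F (t * c)).val)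
          = -(∑ c : F, ((-1 : ℂ)) ^ (Algebra.trace (ZMod 2) F (t * c)).val) := by
        conv_lhs => rw [← Equiv.sum_comp (Equiv.addRight (b i))
          (fun c => ((-1 : ℂ)) ^ (Algebra.trace (ZMod 2) F (t * c)).val)]
        rw [← Finset.sum_neg_distrib]
        exact Finset.sum_congr rfl (fun c _ => key c)
      exact CharZero.neg_eq_self_iff.mp hS.symm
  -- the scaling factor
  have hcard_pos : (0 : ℝ) < (Fintype.card F : ℝ) := by
    exact_mod_cast Fintype.card_pos
  set sc : ℂ := ((Real.sqrt (Fintype.card F) : ℝ) : ℂ) with hsc_def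
  have hs_sq : sc * sc = (Fintype.card F : ℂ) := by
    rw [hsc_def, ← Complex.ofReal_mul, Real.mul_self_sqrt hcard_pos.le]
    push_cast
    ring
  have hs_ne : sc ≠ 0 := by
    rw [hsc_def]
    simp only [ne_eq, Complex.ofReal_eq_zero]
    exact ne_of_gt (Real.sqrt_pos.mpr hcard_pos)
  -- the key Fourier computation
  have hkey : ∀ t : F,
      hOp (∑ c : F, ((-1 : ℂ)) ^ (Algebra.trace (ZMod 2) F (t * c)).val • e c)
        = sc • e t := by
    intro t
    have expand : hOp (∑ c : F, ((-1 : ℂ)) ^ (Algebra.trace (ZMod 2) F (t * c)).val • e c)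
        = sc⁻¹ • ∑ c : F, ∑ d : F,
            (((-1 : ℂ)) ^ (Algebra.trace (ZMod 2) F (t * c)).val *
             ((-1 : ℂ)) ^ (Algebra.trace (ZMod 2) F (c * d)).val) • e d := by
      rw [map_sum, Finset.smul_sum]
      refine Finset.sum_congr rfl fun c _ => ?_
      rw [map_smul, hh c, smul_comm, Finset.smul_sum]
      congr 1
      exact Finset.sum_congr rfl fun d _ => smul_smul _ _ _
    rw [expand, Finset.sum_comm]
    have inner : ∀ d : F,
        (∑ c : F, (((-1 : ℂ)) ^ (Algebra.trace (ZMod 2) F (t * c)).val *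
          ((-1 : ℂ)) ^ (Algebra.trace (ZMod 2) F (c * d)).val) • e d)
        = (if d = t then (Fintype.card F : ℂ) else 0) • e d := by
      intro d
      rw [← Finset.sum_smul]
      congr 1
      calc (∑ c : F, ((-1 : ℂ)) ^ (Algebra.trace (ZMod 2) F (t * c)).val *
              ((-1 : ℂ)) ^ (Algebra.trace (ZMod 2) F (c * d)).val)
          = ∑ c : F, ((-1 : ℂ)) ^ (Algebra.trace (ZMod 2) F ((t + d) * c)).val := by
            refine Finset.sum_congr rfl fun c _ => ?_
            rw [show (t + d) * c = t * c + c * d by ring, map_add, zmod2_neg_one_pow_add]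
        _ = if t + d = 0 then (Fintype.card F : ℂ) else 0 := hchar (t + d)
        _ = if d = t then (Fintype.card F : ℂ) else 0 := by
            congr 1
            simp only [eq_iff_iff]
            constructor
            · intro h
              have h' : t = d := by rwa [CharTwo.add_eq_iff_eq_add, zero_add] at h
              exact h'.symm
            · rintro rfl
              exact CharTwo.add_self_eq_zero _
      done
    rw [Finset.sum_congr rfl (fun d _ => inner d)]
    have : (∑ d : F, (if d = t then (Fintype.card F : ℂ) else 0) • e d)
        = (Fintype.card F : ℂ) • e t := by
      simp [ite_smul]
    rw [this, smul_smul, ← hs_sq, inv_mul_cancel_left₀ hs_ne]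
  -- extensionality through the basis e
  have ext_e : ∀ (T U : (F → ℂ) →ₗ[ℂ] (F → ℂ)), (∀ a, T (e a) = U (e a)) → T = U := by
    intro T U hTU
    apply (Pi.basisFun ℂ F).ext
    intro a
    have he' : e a = Pi.basisFun ℂ F a := by
      funext c
      rw [he]
      simp [Pi.basisFun_apply, Pi.single_apply]
    rw [← he']
    exact hTU a
  -- conclusion 1
  have h_sq : ∀ a, hOp (hOp (e a)) = e a := by
    intro a
    rw [hh a, map_smul, hkey a, smul_smul, inv_mul_cancel₀ hs_ne, one_smul]
  have concl1 : hOp ∘ₗ hOp = LinearMap.id := by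
    apply ext_e
    intro a
    simpa using h_sq a
  -- conclusion 2
  have hd2 : ∀ r a, (dOp r ∘ₗ dOp r) (e a) =
      ((-1 : ℂ) ^ (Algebra.trace (ZMod 2) F (a * r)).val) • e a := by
    intro r a
    rw [LinearMap.comp_apply, hd r a, map_smul, hd r a, smul_smul, ← mul_pow,
      Complex.I_mul_I, hparity]
  -- conclusion 3
  have hq_e : ∀ r a, qOp r (e a) = e (a + r) := by
    intro r a
    have step1 : (dOp r ∘ₗ dOp r) (hOp (e a))
        = sc⁻¹ • ∑ c : F, ((-1 : ℂ)) ^ (Algebra.trace (ZMod 2) F ((a + r) * c)).val • e c := by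
      rw [hh a, map_smul, map_sum]
      congr 1
      refine Finset.sum_congr rfl fun c _ => ?_
      rw [map_smul, hd2 r c, smul_smul]
      congr 1
      rw [show (a + r) * c = a * c + c * r by ring, map_add, zmod2_neg_one_pow_add]
    rw [hq r, LinearMap.comp_apply, LinearMap.comp_apply, step1, map_smul, hkey (a + r),
      smul_smul, inv_mul_cancel₀ hs_ne, one_smul]
  -- conclusion 4
  refine ⟨concl1, hd2, hq_e, ?_⟩
  intro r s'
  apply ext_e
  intro a
  rw [LinearMap.comp_apply, hd2 s' a, map_smul, hq_e r a, LinearMap.smul_apply,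
    LinearMap.comp_apply, hq_e r a, hd2 s' (a + r), smul_smul]
  congr 1
  rw [← zmod2_neg_one_pow_add, ← map_add]
  have harg : r * s' + (a + r) * s' = a * s' := by
    calc r * s' + (a + r) * s' = a * s' + (r * s' + r * s') := by ring
      _ = a * s' := by rw [CharTwo.add_self_eq_zero, add_zero]
  rw [harg]
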